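/- Let A and B be commutative unitary rings with A a subring of B. If (a₁,…,aₙ) is an irreducible λ-quiddity over A, then (a₁,…,aₙ) is also an irreducible λ-quiddity over B; consequently the maximal size of an irreducible λ-quiddity over A is at most the maximal size of an irreducible λ-quiddity over B. -/

import Mathlib

/-- The matrix `[[a, -1], [1, 0]]`. -/
def mMat {A : Type*} [CommRing A] (a : A) : Matrix (Fin 2) (Fin 2) A := !![a, -1; 1, 0]

/-- `M_n(a₁, …, aₙ) = mMat aₙ * ⋯ * mMat a₁`, for the tuple given as a list `[a₁, …, aₙ]`. -/
def mProd {A : Type*} [CommRing A] (l : List A) : Matrix (Fin 2) (Fin 2) A :=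
  ((l.map mMat).reverse).prod

/-- The sum `(a₁,…,aₙ) ⊕ (b₁,…,b_m) = (a₁+b_m, a₂,…,a_{n−1}, aₙ+b₁, b₂,…,b_{m−1})`. -/
def oplus {A : Type*} [CommRing A] (a b : List A) : List A :=
  (a.headD 0 + b.getLastD 0) ::
    (a.dropLast.tail ++ (a.getLastD 0 + b.headD 0) :: b.dropLast.tail)

/-- Two tuples are equivalent if one is a cyclic rotation of the other or of its reversal. -/
def TupEquiv {A : Type*} (a b : List A) : Prop :=
  (∃ k, b = a.rotate k) ∨ (∃ k, b = a.reverse.rotate k)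

/-- A λ-quiddity over `R ⊆ A`: all entries lie in `R` and `M_n(a₁,…,aₙ) = ± Id`. -/
def IsQuiddity {A : Type*} [CommRing A] (R : Set A) (c : List A) : Prop :=
  (∀ x ∈ c, x ∈ R) ∧ (mProd c = 1 ∨ mProd c = -1)

/-- A λ-quiddity `c` over `R` is reducible if `c ∼ a ⊕ b` with `a ∈ R^m`, `m ≥ 3`,
and `b` a λ-quiddity over `R` of size `l ≥ 3`. -/
def IsReducible {A : Type*} [CommRing A] (R : Set A) (c : List A) : Prop :=
  ∃ a b : List A, 3 ≤ a.length ∧ 3 ≤ b.length ∧ (∀ x ∈ a, x ∈ R) ∧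
    IsQuiddity R b ∧ TupEquiv c (oplus a b)

/-- An irreducible λ-quiddity over `R`: a λ-quiddity of size `≥ 3` which is not reducible. -/
def IrreducibleQuiddity {A : Type*} [CommRing A] (R : Set A) (c : List A) : Prop :=
  IsQuiddity R c ∧ 3 ≤ c.length ∧ ¬ IsReducible R c

/-- The continuant `K_i(a₁,…,a_i)`, determinant of the tridiagonal matrix with diagonal
`a₁,…,a_i` and off-diagonal entries `1`; `K₀ = 1`. -/
def cont {A : Type*} [CommRing A] : List A → A
  | [] => 1
  | [a] => a
  | a :: b :: l => a * cont (b :: l) - cont l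

lemma mProd_nil {A : Type*} [CommRing A] : mProd ([] : List A) = 1 := rfl

lemma mProd_cons {A : Type*} [CommRing A] (a : A) (l : List A) :
    mProd (a :: l) = mProd l * mMat a := by
  simp [mProd, List.reverse_cons]

lemma mProd_concat {A : Type*} [CommRing A] (a : A) (l : List A) :
    mProd (l ++ [a]) = mMat a * mProd l := by
  simp [mProd, List.reverse_append]

lemma mMat_map {A B : Type*} [CommRing A] [CommRing B] (f : A →+* B) (a : A) :
    (mMat a).map f = mMat (f a) := by
  ext i j
  fin_cases i <;> fin_cases j <;> simp [mMat, Matrix.map_apply]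

lemma mProd_map {A B : Type*} [CommRing A] [CommRing B] (f : A →+* B) (l : List A) :
    mProd (l.map f) = (mProd l).map f := by
  induction l with
  | nil => simp [mProd_nil, Matrix.map_one f f.map_zero f.map_one]
  | cons a t ih =>
      rw [List.map_cons, mProd_cons, mProd_cons, ih, ← mMat_map]
      exact (Matrix.map_mul).symm

lemma mMat_mem {B : Type*} [CommRing B] (S : Subring B) {a : B} (ha : a ∈ S) (i j : Fin 2) :
    mMat a i j ∈ S := by
  fin_cases i <;> fin_cases j <;> simp [mMat] <;>
    first
      | exact ha
      | exact S.neg_mem S.one_mem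
      | exact S.one_mem
      | exact S.zero_mem

lemma mProd_mem {B : Type*} [CommRing B] (S : Subring B) (l : List B) :
    (∀ x ∈ l, x ∈ S) → ∀ i j, mProd l i j ∈ S := by
  induction l with
  | nil =>
      intro _ i j
      by_cases hij : i = j <;> simp [mProd_nil, Matrix.one_apply, hij, S.one_mem, S.zero_mem]
  | cons a t ih =>
      intro h i j
      rw [mProd_cons, Matrix.mul_apply, Fin.sum_univ_two]
      have ha : a ∈ S := h a List.mem_cons_self
      have ht : ∀ x ∈ t, x ∈ S := fun x hx => h x (List.mem_cons_of_mem _ hx)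
      exact S.add_mem (S.mul_mem (ih ht i 0) (mMat_mem S ha 0 j))
        (S.mul_mem (ih ht i 1) (mMat_mem S ha 1 j))

lemma key_lemma {B : Type*} [CommRing B] (u v ε : B) (p : List B) (hε : ε * ε = 1)
    (h : mProd (u :: (p ++ [v])) = ε • (1 : Matrix (Fin 2) (Fin 2) B)) :
    u = ε * mProd p 0 1 ∧ v = -(ε * mProd p 1 0) := by
  rw [mProd_cons, mProd_concat] at h
  have e1 : !![(0:B),1;-1,v] * mMat v = 1 := by
    rw [mMat, Matrix.mul_fin_two, Matrix.one_fin_two]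
    norm_num
  have e2 : mMat u * !![(0:B),1;-1,u] = 1 := by
    rw [mMat, Matrix.mul_fin_two, Matrix.one_fin_two]
    norm_num
  have hMeq : mProd p = ε • !![(-1 : B), u; -v, -1+v*u] := by
    calc mProd p = 1 * mProd p * 1 := by rw [one_mul, mul_one]
      _ = (!![(0:B),1;-1,v] * mMat v) * mProd p * (mMat u * !![(0:B),1;-1,u]) := by
          rw [e1, e2]
      _ = !![(0:B),1;-1,v] * (mMat v * mProd p * mMat u) * !![(0:B),1;-1,u] := by
          simp only [mul_assoc]
      _ = !![(0:B),1;-1,v] * (ε • (1:Matrix (Fin 2) (Fin 2) B)) * !![(0:B),1;-1,u] := by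
          rw [h]
      _ = ε • (!![(0:B),1;-1,v] * !![(0:B),1;-1,u]) := by
          rw [mul_smul_comm, smul_mul_assoc, mul_one]
      _ = ε • !![(-1 : B), u; -v, -1+v*u] := by
          rw [Matrix.mul_fin_two]; norm_num
  have h01 : mProd p 0 1 = ε * u := by rw [hMeq]; simp
  have h10 : mProd p 1 0 = ε * (-v) := by rw [hMeq]; simp
  constructor
  · rw [h01, ← mul_assoc, hε, one_mul]
  · rw [h10, ← mul_assoc, hε, one_mul, neg_neg]

lemma headD_map {A B : Type*} [CommRing A] [CommRing B] (f : A →+* B) (l : List A) :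
    (l.map f).headD 0 = f (l.headD 0) := by
  cases l <;> simp

lemma getLastD_map {A B : Type*} [CommRing A] [CommRing B] (f : A →+* B) (l : List A) :
    (l.map f).getLastD 0 = f (l.getLastD 0) := by
  rcases List.eq_nil_or_concat l with rfl | ⟨m, y, rfl⟩
  · simp
  · simp [List.concat_eq_append, List.getLastD_concat]

lemma oplus_map {A B : Type*} [CommRing A] [CommRing B] (f : A →+* B) (a b : List A) :
    (oplus a b).map f = oplus (a.map f) (b.map f) := by
  simp only [oplus, List.map_cons, List.map_append, map_add, headD_map, getLastD_map,
    List.map_tail, List.map_dropLast]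

lemma exists_map_eq {A B : Type*} [CommRing A] [CommRing B] (f : A →+* B) :
    ∀ l : List B, (∀ x ∈ l, x ∈ f.range) → ∃ l' : List A, l'.map f = l := by
  intro l
  induction l with
  | nil => exact fun _ => ⟨[], rfl⟩
  | cons x t ih =>
      intro h
      obtain ⟨t', ht⟩ := ih (fun y hy => h y (List.mem_cons_of_mem _ hy))
      obtain ⟨x', hx⟩ := RingHom.mem_range.1 (h x List.mem_cons_self)
      exact ⟨x' :: t', by simp [hx, ht]⟩

lemma exists_cons_concat {α : Type*} (l : List α) (h : 2 ≤ l.length) :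
    ∃ x m y, l = x :: (m ++ [y]) := by
  cases l with
  | nil => simp at h
  | cons x t =>
      rcases List.eq_nil_or_concat t with rfl | ⟨m, y, rfl⟩
      · simp at h
      · exact ⟨x, m, y, by simp [List.concat_eq_append]⟩


/-- If `A` is a subring of `B` (given by an injective ring homomorphism), then any
irreducible λ-quiddity over `A` is an irreducible λ-quiddity over `B`; consequently the
maximal size of an irreducible λ-quiddity over `A` is at most the one over `B`. -/
theorem stmt17 {A B : Type*} [CommRing A] [CommRing B] (f : A →+* B)
    (hf : Function.Injective f) :
    (∀ c : List A, IrreducibleQuiddity (Set.univ : Set A) c →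
      IrreducibleQuiddity (Set.univ : Set B) (c.map f)) ∧
    sSup {n : ℕ∞ | ∃ c : List A,
        IrreducibleQuiddity (Set.univ : Set A) c ∧ (c.length : ℕ∞) = n} ≤
      sSup {n : ℕ∞ | ∃ c : List B,
        IrreducibleQuiddity (Set.univ : Set B) c ∧ (c.length : ℕ∞) = n} := by
  have map1 : (1 : Matrix (Fin 2) (Fin 2) A).map f = 1 :=
    Matrix.map_one f f.map_zero f.map_one
  have mapneg1 : (-1 : Matrix (Fin 2) (Fin 2) A).map f = -1 := by
    ext i j
    by_cases hij : i = j <;>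
      simp [Matrix.map_apply, Matrix.neg_apply, Matrix.one_apply, hij]
  have main : ∀ c : List A, IrreducibleQuiddity (Set.univ : Set A) c →
      IrreducibleQuiddity (Set.univ : Set B) (c.map f) := by
    intro c hc
    obtain ⟨⟨-, hq⟩, hlen, hred⟩ := hc
    refine ⟨⟨fun _ _ => trivial, ?_⟩, by simpa using hlen, ?_⟩
    · rcases hq with h | h
      · left; rw [mProd_map, h, map1]
      · right; rw [mProd_map, h, mapneg1]
    · rintro ⟨a, b, ha3, hb3, -, ⟨-, hbq⟩, hequiv⟩
      apply hred
      have hmemall : ∀ z ∈ oplus a b, z ∈ f.range := by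
        intro z hz
        have hzc : z ∈ c.map f := by
          rcases hequiv with ⟨k, hk⟩ | ⟨k, hk⟩
          · rw [hk] at hz; exact (List.mem_rotate).1 hz
          · rw [hk] at hz; exact List.mem_reverse.1 ((List.mem_rotate).1 hz)
        rcases List.mem_map.1 hzc with ⟨w, -, rfl⟩
        exact ⟨w, rfl⟩
      obtain ⟨x, m, y, rfl⟩ := exists_cons_concat a (le_trans (by norm_num) ha3)
      obtain ⟨u, p, v, rfl⟩ := exists_cons_concat b (le_trans (by norm_num) hb3)
      have hd1 : (x :: (m ++ [y])).headD 0 = x := rfl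
      have hd2 : (x :: (m ++ [y])).getLastD 0 = y := by
        show ((x :: m) ++ [y]).getLastD 0 = y
        exact List.getLastD_concat
      have hd3 : (x :: (m ++ [y])).dropLast.tail = m := by
        show ((x :: m) ++ [y]).dropLast.tail = m
        rw [List.dropLast_concat]
        rfl
      have hd4 : (u :: (p ++ [v])).headD 0 = u := rfl
      have hd5 : (u :: (p ++ [v])).getLastD 0 = v := by
        show ((u :: p) ++ [v]).getLastD 0 = v
        exact List.getLastD_concat
      have hd6 : (u :: (p ++ [v])).dropLast.tail = p := by
        show ((u :: p) ++ [v]).dropLast.tail = p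
        rw [List.dropLast_concat]
        rfl
      have hop : oplus (x :: (m ++ [y])) (u :: (p ++ [v]))
          = (x + v) :: (m ++ (y + u) :: p) := by
        simp only [oplus, hd1, hd2, hd3, hd4, hd5, hd6]
      have hxv : x + v ∈ f.range := hmemall _ (by rw [hop]; exact List.mem_cons_self)
      have hyu : y + u ∈ f.range := hmemall _ (by rw [hop]; simp)
      have hm : ∀ z ∈ m, z ∈ f.range := fun z hz => hmemall z (by rw [hop]; simp [hz])
      have hp : ∀ z ∈ p, z ∈ f.range := fun z hz => hmemall z (by rw [hop]; simp [hz])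
      obtain ⟨ε, hε, hεmem, hprod⟩ : ∃ ε : B, ε * ε = 1 ∧ ε ∈ f.range ∧
          mProd (u :: (p ++ [v])) = ε • (1 : Matrix (Fin 2) (Fin 2) B) := by
        rcases hbq with h | h
        · exact ⟨1, by ring, one_mem _, by rw [h, one_smul]⟩
        · exact ⟨-1, by ring, neg_mem (one_mem _), by rw [h]; exact (neg_one_smul _ _).symm⟩
      obtain ⟨hu, hv⟩ := key_lemma u v ε p hε hprod
      have hpmem : ∀ i j, mProd p i j ∈ f.range := mProd_mem _ p hp
      have humem : u ∈ f.range := hu ▸ mul_mem hεmem (hpmem 0 1)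
      have hvmem : v ∈ f.range := hv ▸ neg_mem (mul_mem hεmem (hpmem 1 0))
      have hxmem : x ∈ f.range := by simpa using sub_mem hxv hvmem
      have hymem : y ∈ f.range := by simpa using sub_mem hyu humem
      obtain ⟨m', hm'⟩ := exists_map_eq f m hm
      obtain ⟨p', hp'⟩ := exists_map_eq f p hp
      obtain ⟨x', hx'⟩ := RingHom.mem_range.1 hxmem
      obtain ⟨y', hy'⟩ := RingHom.mem_range.1 hymem
      obtain ⟨u', hu'⟩ := RingHom.mem_range.1 humem
      obtain ⟨v', hv'⟩ := RingHom.mem_range.1 hvmem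
      have ha' : (x' :: (m' ++ [y'])).map f = x :: (m ++ [y]) := by
        simp [hx', hm', hy']
      have hb' : (u' :: (p' ++ [v'])).map f = u :: (p ++ [v]) := by
        simp [hu', hp', hv']
      have hlm : m'.length = m.length := by
        have := congrArg List.length hm'; simpa using this
      have hlp : p'.length = p.length := by
        have := congrArg List.length hp'; simpa using this
      refine ⟨x' :: (m' ++ [y']), u' :: (p' ++ [v']), ?_, ?_, fun _ _ => trivial,
        ⟨fun _ _ => trivial, ?_⟩, ?_⟩
      · simp only [List.length_cons, List.length_append, List.length_singleton, hlm]
        simpa using ha3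
      · simp only [List.length_cons, List.length_append, List.length_singleton, hlp]
        simpa using hb3
      · have hmm := mProd_map f (u' :: (p' ++ [v']))
        rw [hb'] at hmm
        rcases hbq with h | h
        · left
          apply Matrix.map_injective hf
          show (mProd (u' :: (p' ++ [v']))).map f = (1 : Matrix (Fin 2) (Fin 2) A).map f
          rw [map1, ← hmm, h]
        · right
          apply Matrix.map_injective hf
          show (mProd (u' :: (p' ++ [v']))).map f = (-1 : Matrix (Fin 2) (Fin 2) A).map f
          rw [mapneg1, ← hmm, h]
      · have hab : (oplus (x' :: (m' ++ [y'])) (u' :: (p' ++ [v']))).map f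
            = oplus (x :: (m ++ [y])) (u :: (p ++ [v])) := by
          rw [oplus_map, ha', hb']
        rcases hequiv with ⟨k, hk⟩ | ⟨k, hk⟩
        · left
          refine ⟨k, (List.map_injective_iff.2 hf) ?_⟩
          rw [hab, hk, List.map_rotate]
        · right
          refine ⟨k, (List.map_injective_iff.2 hf) ?_⟩
          rw [hab, hk, List.map_rotate, List.map_reverse]
  refine ⟨main, sSup_le_sSup ?_⟩
  rintro n ⟨c, hc, rfl⟩
  exact ⟨c.map f, main c hc, by simp⟩
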